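/- Let G be a locally compact Hausdorff topological group that is not compact, and let H ⊆ G be a subgroup with H ≠ {e}. Then the pair (G,H) is not relatively extremely amenable; that is, there exists a continuous action of G on a nonempty compact Hausdorff space X such that no point of X is fixed by every element of H. -/

import Mathlib

open Set Filter Topology Pointwise

section VeechAux

variable {G : Type} [Group G] [TopologicalSpace G] [IsTopologicalGroup G] [T2Space G]

/-- Counting lemma: a set of pairwise `V`-separated points inside a compact set is finite,
with a cardinality bound independent of the set. -/
lemma veech_sep_count {V : Set G} (hV : V ∈ 𝓝 (1 : G)) {K : Set G} (hK : IsCompact K) :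
    ∃ N : ℕ, ∀ S : Set G, S ⊆ K → (S.Pairwise fun a b => a * b⁻¹ ∉ V) →
      S.Finite ∧ ∀ s : Finset G, ↑s ⊆ S → s.card ≤ N := by
  classical
  have hcont : Continuous fun p : G × G => p.1 * p.2⁻¹ := by continuity
  have h1 : (fun p : G × G => p.1 * p.2⁻¹) ⁻¹' V ∈ 𝓝 ((1 : G), (1 : G)) := by
    apply hcont.continuousAt.preimage_mem_nhds
    simpa using hV
  rcases mem_nhds_prod_iff.1 h1 with ⟨U₁, hU₁, U₂, hU₂, hU⟩
  have hWV : ∀ a ∈ U₁ ∩ U₂, ∀ b ∈ U₁ ∩ U₂, a * b⁻¹ ∈ V := by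
    intro a ha b hb
    exact hU (Set.mk_mem_prod ha.1 hb.2)
  have hWn : U₁ ∩ U₂ ∈ 𝓝 (1 : G) := inter_mem hU₁ hU₂
  rcases mem_nhds_iff.1 hWn with ⟨O, hOW, hOopen, hO1⟩
  obtain ⟨t, htK, hcover⟩ := hK.elim_nhds_subcover (fun x => O * {x}) (fun x _ =>
    (hOopen.mul_right).mem_nhds ⟨1, hO1, x, rfl, one_mul x⟩)
  refine ⟨t.card, fun S hSK hsep => ?_⟩
  have hbound : ∀ s : Finset G, ↑s ⊆ S → s.card ≤ t.card := by
    intro s hs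
    set F : G → G := fun a => if h : ∃ x ∈ t, a ∈ O * {x} then h.choose else 1 with hF
    have hFspec : ∀ a ∈ s, F a ∈ t ∧ a ∈ O * {F a} := by
      intro a ha
      have hex : ∃ x ∈ t, a ∈ O * {x} := by
        have := hcover (hSK (hs ha))
        simpa using this
      rw [hF]
      simp only [dif_pos hex]
      exact ⟨hex.choose_spec.1, hex.choose_spec.2⟩
    refine Finset.card_le_card_of_injOn F (fun a ha => (hFspec a ha).1) ?_
    intro a ha b hb hab
    by_contra hne
    obtain ⟨o₁, ho₁, q₁, hq₁, hoq₁⟩ := (hFspec a ha).2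
    obtain ⟨o₂, ho₂, q₂, hq₂, hoq₂⟩ := (hFspec b hb).2
    rw [mem_singleton_iff] at hq₁ hq₂
    subst hq₁; subst hq₂
    have hV' : a * b⁻¹ ∈ V := by
      have : a * b⁻¹ = o₁ * o₂⁻¹ := by
        rw [← hoq₁, ← hoq₂, hab]
        group
      rw [this]
      exact hWV o₁ (hOW ho₁) o₂ (hOW ho₂)
    exact hsep (hs ha) (hs hb) hne hV'
  constructor
  · by_contra hinf
    obtain ⟨s, hsub, hcard⟩ := Set.Infinite.exists_subset_card_eq hinf (t.card + 1)
    have := hbound s hsub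
    omega
  · exact hbound

open Classical in
private noncomputable def veechGreedy {G : Type} (N : ℕ) (nbr : G → Finset G) :
    G → Fin (N + 1) :=
  (IsWellFounded.wf (r := @WellOrderingRel G)).fix fun t prev =>
    if hex : ∃ j : Fin (N + 1),
        j ∉ (nbr t).image (fun t' => if hr : WellOrderingRel t' t then prev t' hr else 0) then
      hex.choose
    else 0

open Classical in
private lemma veechGreedy_spec {G : Type} (N : ℕ) (nbr : G → Finset G)
    (hcard : ∀ t, (nbr t).card ≤ N) :
    ∀ t t' : G, WellOrderingRel t' t → t' ∈ nbr t →
      veechGreedy N nbr t' ≠ veechGreedy N nbr t := by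
  classical
  intro t t' hr hmem
  have heq := (IsWellFounded.wf (r := @WellOrderingRel G)).fix_eq (fun t prev =>
    if hex : ∃ j : Fin (N + 1),
        j ∉ (nbr t).image (fun t'' => if hr : WellOrderingRel t'' t then prev t'' hr else 0) then
      hex.choose
    else 0) t
  have hex : ∃ j : Fin (N + 1), j ∉ (nbr t).image
      (fun t'' => if hr : WellOrderingRel t'' t then veechGreedy N nbr t'' else 0) := by
    by_contra hall
    push_neg at hall
    have hsub : (Finset.univ : Finset (Fin (N + 1))) ⊆ (nbr t).image
        (fun t'' => if hr : WellOrderingRel t'' t then veechGreedy N nbr t'' else 0) :=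
      fun j _ => hall j
    have h1 := Finset.card_le_card hsub
    rw [Finset.card_univ, Fintype.card_fin] at h1
    have h2 := Finset.card_image_le (s := nbr t)
      (f := fun t'' => if hr : WellOrderingRel t'' t then veechGreedy N nbr t'' else 0)
    have h3 := hcard t
    clear heq hr hmem
    omega
  have hval : veechGreedy N nbr t = hex.choose := by
    delta veechGreedy
    rw [heq]
    exact dif_pos hex
  have hnot := hex.choose_spec
  rw [hval]
  intro hcon
  apply hnot
  rw [← hcon]
  exact Finset.mem_image.2 ⟨t', hmem, by rw [dif_pos hr]⟩

lemma veech_coloring {M : Set G} (E : G → G → Prop) (hsymm : ∀ a b, E a b → E b a) (N : ℕ)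
    (hdeg : ∀ t : G, ∃ s : Finset G, {t' | t' ∈ M ∧ E t' t} ⊆ ↑s ∧ s.card ≤ N) :
    ∃ c : G → Fin (N + 1), ∀ t ∈ M, ∀ t' ∈ M, t ≠ t' → E t t' → c t ≠ c t' := by
  classical
  set nbr : G → Finset G := fun t => (hdeg t).choose with hnbr
  have hsub : ∀ t, {t' | t' ∈ M ∧ E t' t} ⊆ ↑(nbr t) := fun t => (hdeg t).choose_spec.1
  have hcard : ∀ t, (nbr t).card ≤ N := fun t => (hdeg t).choose_spec.2
  refine ⟨veechGreedy N nbr, ?_⟩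
  intro t ht t' ht' hne hE
  rcases trichotomous_of (@WellOrderingRel G) t t' with hr | he | hr
  · exact veechGreedy_spec N nbr hcard t' t hr (hsub t' ⟨ht, hE⟩)
  · exact absurd he hne
  · exact (veechGreedy_spec N nbr hcard t t' hr (hsub t ⟨ht', hsymm _ _ hE⟩)).symm

/-- Uniform continuity (w.r.t. left translation) of a compactly supported continuous function. -/
lemma veech_unif_cont [LocallyCompactSpace G] {ψ : G → ℝ} (hψ : Continuous ψ) {K₀ : Set G}
    (hK₀ : IsCompact K₀) (hsupp : ∀ y : G, y ∉ K₀ → ψ y = 0) {ε : ℝ} (hε : 0 < ε) :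
    ∃ U ∈ 𝓝 (1 : G), ∀ u ∈ U, ∀ y : G, |ψ (u * y) - ψ y| ≤ ε := by
  classical
  obtain ⟨V₁, hV₁c, hV₁⟩ := exists_compact_mem_nhds (1 : G)
  set K' : Set G := K₀ ∪ V₁⁻¹ * K₀ with hK'
  have hK'c : IsCompact K' := hK₀.union (hV₁c.inv.mul hK₀)
  have key : ∀ y : G, ∃ Uy Wy : Set G, Uy ∈ 𝓝 (1 : G) ∧ Wy ∈ 𝓝 y ∧
      ∀ u ∈ Uy, ∀ z ∈ Wy, |ψ (u * z) - ψ y| < ε / 2 := by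
    intro y
    have hc : ContinuousAt (fun p : G × G => ψ (p.1 * p.2)) (1, y) :=
      (hψ.comp continuous_mul).continuousAt
    have hball : {x : ℝ | |x - ψ y| < ε / 2} ∈ 𝓝 (ψ ((1 : G) * y)) := by
      rw [one_mul]
      have : IsOpen {x : ℝ | |x - ψ y| < ε / 2} :=
        isOpen_lt ((continuous_id.sub continuous_const).abs) continuous_const
      exact this.mem_nhds (by simp; positivity)
    have hpre := hc.preimage_mem_nhds hball
    rcases mem_nhds_prod_iff.1 hpre with ⟨Uy, hUy, Wy, hWy, hUW⟩
    exact ⟨Uy, Wy, hUy, hWy, fun u hu z hz => hUW (Set.mk_mem_prod hu hz)⟩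
  choose Uy Wy hUy hWy hkey using key
  obtain ⟨t, htK, hcover⟩ := hK'c.elim_nhds_subcover Wy (fun y _ => hWy y)
  refine ⟨V₁ ∩ ⋂ y ∈ t, Uy y, ?_, ?_⟩
  · exact inter_mem hV₁ ((biInter_finset_mem t).2 fun y _ => hUy y)
  · intro u hu y
    by_cases hy : y ∈ K'
    · have := hcover hy
      rw [mem_iUnion₂] at this
      obtain ⟨y₀, hy₀t, hyW⟩ := this
      have hu' : u ∈ Uy y₀ := by
        have := hu.2
        rw [mem_iInter₂] at this
        exact this y₀ hy₀t
      have h1 := hkey y₀ u hu' y hyW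
      have h2 := hkey y₀ 1 (mem_of_mem_nhds (hUy y₀)) y hyW
      rw [one_mul] at h2
      have := abs_sub_le (ψ (u * y)) (ψ y₀) (ψ y)
      rw [abs_sub_comm (ψ y₀) (ψ y)] at this
      linarith
    · have h1 : ψ y = 0 := hsupp y fun hyK₀ => hy (Or.inl hyK₀)
      have h2 : ψ (u * y) = 0 := by
        apply hsupp
        intro hins
        apply hy
        exact Or.inr ⟨u⁻¹, Set.inv_mem_inv.2 hu.1, u * y, hins, by group⟩
      rw [h1, h2, sub_zero, abs_zero]
      exact hε.le

set_option maxHeartbeats 1600000 in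
/-- The key construction (Veech): for any `h ≠ 1` in a locally compact Hausdorff group there is
a finitely-valued "partition of unity like" function separating `h*x` from `x` uniformly. -/
lemma veech_function [LocallyCompactSpace G] {h : G} (hne : h ≠ 1) :
    ∃ (k : ℕ) (f : G → Fin (k + 1) → ℝ),
      (∀ x j, f x j ∈ Icc (0 : ℝ) 1) ∧ (∀ x, ∃ j, f x j = 1) ∧
      (∀ x j, f (h * x) j = 0 ∨ f x j = 0) ∧
      (∀ ε : ℝ, 0 < ε → ∃ U ∈ 𝓝 (1 : G), ∀ u ∈ U, ∀ x j, |f (u * x) j - f x j| ≤ ε) := by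
  classical
  -- a compact symmetric neighborhood V of 1 with h ∉ V⁴
  have hhc : ({h}ᶜ : Set G) ∈ 𝓝 (1 : G) :=
    isOpen_compl_singleton.mem_nhds (by simpa using hne.symm)
  obtain ⟨V₄, hV₄n, hsplit⟩ := exists_nhds_one_split4 hhc
  obtain ⟨K₁, hK₁n, hK₁sub, hK₁c⟩ := local_compact_nhds hV₄n
  set V : Set G := K₁ ∩ K₁⁻¹ with hVdef
  have hVc : IsCompact V := hK₁c.inter hK₁c.inv
  have hK₁inv : K₁⁻¹ ∈ 𝓝 (1 : G) := by
    have h1 : ContinuousAt (fun g : G => g⁻¹) 1 := continuous_inv.continuousAt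
    have h2 := h1.preimage_mem_nhds (by rw [inv_one]; exact hK₁n)
    simpa [Set.inv_preimage] using h2
  have hVn : V ∈ 𝓝 (1 : G) := inter_mem hK₁n hK₁inv
  have hVsymm : ∀ a : G, a ∈ V → a⁻¹ ∈ V := by
    intro a ha
    exact ⟨Set.mem_inv.1 ha.2, by rw [Set.mem_inv, inv_inv]; exact ha.1⟩
  have hVsub : V ⊆ V₄ := fun x hx => hK₁sub hx.1
  have hV4 : ∀ a ∈ V, ∀ b ∈ V, ∀ c ∈ V, ∀ d ∈ V, a * b * c * d ≠ h := by
    intro a ha b hb c hc d hd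
    have := hsplit (hVsub ha) (hVsub hb) (hVsub hc) (hVsub hd)
    simpa using this
  have hV1 : (1 : G) ∈ V := mem_of_mem_nhds hVn
  -- Urysohn function ψ
  rcases mem_nhds_iff.1 hVn with ⟨O, hOV, hOopen, hO1⟩
  have hVOV : V ⊆ O * V := fun x hx => ⟨1, hO1, x, hx, one_mul x⟩
  have hOVopen : IsOpen (O * V) := hOopen.mul_right
  obtain ⟨ψ₀, hψ1, hψ0, hψcs, hψIcc⟩ := exists_continuous_one_zero_of_isCompact hVc
    (isClosed_compl_iff.2 hOVopen) (Set.disjoint_left.2 fun x hxV hxc => hxc (hVOV hxV))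
  set ψ : G → ℝ := ⇑ψ₀ with hψdef
  set V2 : Set G := V * V with hV2def
  have hV2c : IsCompact V2 := hVc.mul hVc
  have hOVV2 : O * V ⊆ V2 := mul_subset_mul_right hOV
  have hψsupp : ∀ y : G, ψ y ≠ 0 → y ∈ V2 := by
    intro y hy
    by_contra hyn
    exact hy (hψ0 fun hmem => hyn (hOVV2 hmem))
  have hV2symm : ∀ a : G, a ∈ V2 → a⁻¹ ∈ V2 := by
    rintro a ⟨p, hp, q, hq, rfl⟩
    exact ⟨q⁻¹, hVsymm q hq, p⁻¹, hVsymm p hp, (mul_inv_rev p q).symm⟩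
  -- the compact "edge" set
  set KE : Set G := (fun p : G × G => p.1 * h * p.2) '' (V2 ×ˢ V2) ∪
      (fun p : G × G => p.1 * h⁻¹ * p.2) '' (V2 ×ˢ V2) with hKEdef
  have hKEc : IsCompact KE :=
    IsCompact.union
      ((hV2c.prod hV2c).image ((continuous_fst.mul continuous_const).mul continuous_snd))
      ((hV2c.prod hV2c).image ((continuous_fst.mul continuous_const).mul continuous_snd))
  have hKEsymm : ∀ a : G, a ∈ KE → a⁻¹ ∈ KE := by
    rintro a (⟨⟨p, q⟩, ⟨hp, hq⟩, rfl⟩ | ⟨⟨p, q⟩, ⟨hp, hq⟩, rfl⟩)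
    · refine Or.inr ⟨(q⁻¹, p⁻¹), ⟨hV2symm q hq, hV2symm p hp⟩, ?_⟩
      show q⁻¹ * h⁻¹ * p⁻¹ = (p * h * q)⁻¹
      group
    · refine Or.inl ⟨(q⁻¹, p⁻¹), ⟨hV2symm q hq, hV2symm p hp⟩, ?_⟩
      show q⁻¹ * h * p⁻¹ = (p * h⁻¹ * q)⁻¹
      group
  -- counting
  obtain ⟨N, hcount⟩ := veech_sep_count hVn hKEc
  -- maximal separated set
  have hchainub : ∀ ch ⊆ {T : Set G | T.Pairwise fun a b => a * b⁻¹ ∉ V},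
      IsChain (· ⊆ ·) ch → ∃ ub ∈ {T : Set G | T.Pairwise fun a b => a * b⁻¹ ∉ V},
        ∀ s ∈ ch, s ⊆ ub := by
    intro ch hchS hchain
    refine ⟨⋃₀ ch, ?_, fun s hs => subset_sUnion_of_mem hs⟩
    rintro a ⟨sa, hsac, hasa⟩ b ⟨sb, hsbc, hbsb⟩ hab
    rcases hchain.total hsac hsbc with hsub | hsub
    · exact hchS hsbc (hsub hasa) hbsb hab
    · exact hchS hsac hasa (hsub hbsb) hab
  obtain ⟨M, hMmax⟩ :=
    zorn_subset {T : Set G | T.Pairwise fun a b => a * b⁻¹ ∉ V} hchainub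
  have hMsep : M.Pairwise fun a b => a * b⁻¹ ∉ V := hMmax.1
  have hcov : ∀ x : G, ∃ t ∈ M, x * t⁻¹ ∈ V := by
    intro x
    by_contra hno
    push_neg at hno
    have hxM : x ∉ M := fun hxM => hno x hxM (by simpa using hV1)
    have hins : insert x M ∈ {T : Set G | T.Pairwise fun a b => a * b⁻¹ ∉ V} := by
      refine Set.pairwise_insert.2 ⟨hMsep, ?_⟩
      intro b hbM hxb
      refine ⟨hno b hbM, fun hbx => ?_⟩
      have := hVsymm _ hbx
      rw [mul_inv_rev, inv_inv] at this
      exact hno b hbM this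
    exact hxM (hMmax.2 hins (subset_insert x M) (mem_insert x M))
  -- degree bound
  have hdeg : ∀ t : G, ∃ s : Finset G, {t' | t' ∈ M ∧ t' * t⁻¹ ∈ KE} ⊆ ↑s ∧ s.card ≤ N := by
    intro t
    set S' : Set G := (fun t' => t' * t⁻¹) '' {t' | t' ∈ M ∧ t' * t⁻¹ ∈ KE} with hS'def
    have hS'K : S' ⊆ KE := by rintro _ ⟨t', ⟨_, hEd⟩, rfl⟩; exact hEd
    have hS'sep : S'.Pairwise fun a b => a * b⁻¹ ∉ V := by
      rintro _ ⟨t₁, ⟨ht₁, _⟩, rfl⟩ _ ⟨t₂, ⟨ht₂, _⟩, rfl⟩ hab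
      have ht12 : t₁ ≠ t₂ := fun hEq => hab (by rw [hEq])
      have hsep := hMsep ht₁ ht₂ ht12
      have harg : t₁ * t⁻¹ * (t₂ * t⁻¹)⁻¹ = t₁ * t₂⁻¹ := by group
      rw [harg]
      exact hsep
    obtain ⟨hfin, hbnd⟩ := hcount S' hS'K hS'sep
    have hfin2 : {t' | t' ∈ M ∧ t' * t⁻¹ ∈ KE}.Finite := by
      have hsubim : {t' | t' ∈ M ∧ t' * t⁻¹ ∈ KE} ⊆ (fun a => a * t) '' S' := fun t' ht' =>
        ⟨t' * t⁻¹, mem_image_of_mem _ ht', by group⟩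
      exact (hfin.image _).subset hsubim
    have hinj : Function.Injective fun t' : G => t' * t⁻¹ := fun a b hab =>
      mul_right_cancel hab
    refine ⟨hfin2.toFinset, by simp [Set.Finite.coe_toFinset], ?_⟩
    have hb := hbnd (hfin2.toFinset.image fun t' => t' * t⁻¹) ?_
    · rwa [Finset.card_image_of_injective _ hinj] at hb
    · intro a ha
      rw [Finset.coe_image, Set.Finite.coe_toFinset] at ha
      exact ha
  -- coloring
  obtain ⟨c, hc⟩ := veech_coloring (fun a b => a * b⁻¹ ∈ KE)
    (fun a b hab => by
      have := hKEsymm _ hab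
      rwa [mul_inv_rev, inv_inv] at this) N hdeg
  -- the function
  set f : G → Fin (N + 1) → ℝ := fun x j =>
    sSup (insert (0 : ℝ) ((fun t => ψ (x * t⁻¹)) '' {t | t ∈ M ∧ c t = j})) with hfdef
  have hbdd : ∀ x j, BddAbove (insert (0 : ℝ)
      ((fun t => ψ (x * t⁻¹)) '' {t | t ∈ M ∧ c t = j})) := by
    intro x j
    refine ⟨1, ?_⟩
    intro r hr
    rcases mem_insert_iff.1 hr with rfl | ⟨t', _, rfl⟩
    · exact zero_le_one
    · exact (hψIcc _).2
  have hge0 : ∀ x j, 0 ≤ f x j := fun x j => le_csSup (hbdd x j) (mem_insert _ _)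
  have hle1 : ∀ x j, f x j ≤ 1 := by
    intro x j
    apply csSup_le (insert_nonempty _ _)
    intro r hr
    rcases mem_insert_iff.1 hr with rfl | ⟨t', _, rfl⟩
    · exact zero_le_one
    · exact (hψIcc _).2
  have hpos : ∀ x j, 0 < f x j → ∃ t, t ∈ M ∧ c t = j ∧ x * t⁻¹ ∈ V2 := by
    intro x j hx
    by_contra hnone
    push_neg at hnone
    have hfle : f x j ≤ 0 := by
      apply csSup_le (insert_nonempty _ _)
      intro r hr
      rcases mem_insert_iff.1 hr with rfl | ⟨t', ht', rfl⟩
      · exact le_refl 0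
      · have h0 : ψ (x * t'⁻¹) = 0 := by
          by_contra h0
          exact hnone t' ht'.1 ht'.2 (hψsupp _ h0)
        exact le_of_eq h0
    exact absurd hfle (not_le.2 hx)
  refine ⟨N, f, fun x j => ⟨hge0 x j, hle1 x j⟩, ?_, ?_, ?_⟩
  · -- some coordinate equals 1
    intro x
    obtain ⟨t₀, ht₀M, ht₀V⟩ := hcov x
    refine ⟨c t₀, le_antisymm (hle1 x _) ?_⟩
    have hmem : ψ (x * t₀⁻¹) ∈ insert (0 : ℝ)
        ((fun t => ψ (x * t⁻¹)) '' {t | t ∈ M ∧ c t = c t₀}) :=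
      mem_insert_of_mem _ ⟨t₀, ⟨ht₀M, rfl⟩, rfl⟩
    have hle := le_csSup (hbdd x (c t₀)) hmem
    have h1 : ψ (x * t₀⁻¹) = 1 := by simpa using hψ1 ht₀V
    rw [h1] at hle
    exact hle
  · -- disjoint supports
    intro x j
    by_contra hcon
    push_neg at hcon
    obtain ⟨h1, h2⟩ := hcon
    obtain ⟨t, htM, htc, htV2⟩ := hpos _ _ (lt_of_le_of_ne (hge0 _ _) (Ne.symm h1))
    obtain ⟨t', ht'M, ht'c, ht'V2⟩ := hpos _ _ (lt_of_le_of_ne (hge0 _ _) (Ne.symm h2))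
    by_cases hEq : t = t'
    · subst hEq
      obtain ⟨p₁, hp₁, p₂, hp₂, hpe⟩ := htV2
      obtain ⟨q₁, hq₁, q₂, hq₂, hqe⟩ := ht'V2
      have hpe' : p₁ * p₂ = h * x * t⁻¹ := hpe
      have hqe' : q₁ * q₂ = x * t⁻¹ := hqe
      have heqh : p₁ * p₂ * q₂⁻¹ * q₁⁻¹ = h := by
        have e : h = (p₁ * p₂) * (q₁ * q₂)⁻¹ := by
          rw [hpe', hqe']; group
        rw [e]; group
      exact hV4 p₁ hp₁ p₂ hp₂ q₂⁻¹ (hVsymm _ hq₂) q₁⁻¹ (hVsymm _ hq₁) heqh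
    · have hedge : t * t'⁻¹ ∈ KE := by
        refine Or.inl ⟨((h * x * t⁻¹)⁻¹, x * t'⁻¹),
          ⟨hV2symm _ (by rw [mul_assoc] at htV2 ⊢; exact htV2), ht'V2⟩, ?_⟩
        show (h * x * t⁻¹)⁻¹ * h * (x * t'⁻¹) = t * t'⁻¹
        group
      exact hc t htM t' ht'M hEq hedge (by rw [htc, ht'c])
  · -- uniform continuity
    intro ε hε
    obtain ⟨U, hU, hUp⟩ := veech_unif_cont ψ₀.continuous hV2c
      (fun y hy => by
        by_contra h0
        exact hy (hψsupp y h0)) hε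
    refine ⟨U, hU, ?_⟩
    intro u hu x j
    have key1 : f (u * x) j ≤ f x j + ε := by
      apply csSup_le (insert_nonempty _ _)
      intro r hr
      rcases mem_insert_iff.1 hr with rfl | ⟨t', ht', rfl⟩
      · have := hge0 x j; linarith
      · have hab := abs_le.1 (hUp u hu (x * t'⁻¹))
        have h2 : ψ (x * t'⁻¹) ≤ f x j :=
          le_csSup (hbdd x j) (mem_insert_of_mem _ ⟨t', ht', rfl⟩)
        have harg : u * x * t'⁻¹ = u * (x * t'⁻¹) := by rw [mul_assoc]
        show ψ (u * x * t'⁻¹) ≤ f x j + ε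
        rw [harg]
        linarith [hab.2]
    have key2 : f x j ≤ f (u * x) j + ε := by
      apply csSup_le (insert_nonempty _ _)
      intro r hr
      rcases mem_insert_iff.1 hr with rfl | ⟨t', ht', rfl⟩
      · have := hge0 (u * x) j; linarith
      · have hab := abs_le.1 (hUp u hu (x * t'⁻¹))
        have h2 : ψ (u * (x * t'⁻¹)) ≤ f (u * x) j := by
          have harg : u * (x * t'⁻¹) = u * x * t'⁻¹ := by rw [mul_assoc]
          rw [harg]
          exact le_csSup (hbdd (u * x) j) (mem_insert_of_mem _ ⟨t', ht', rfl⟩)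
        show ψ (x * t'⁻¹) ≤ f (u * x) j + ε
        linarith [hab.1]
    rw [abs_le]
    exact ⟨by linarith, by linarith⟩

end VeechAux

/-- A topological group `G` is *extremely amenable* if every continuous action of `G`
on a nonempty compact Hausdorff space has a `G`-fixed point. -/
def ExtremelyAmenable (G : Type) [Group G] [TopologicalSpace G] : Prop :=
  ∀ (X : Type) [TopologicalSpace X] [CompactSpace X] [T2Space X] [Nonempty X]
    [MulAction G X] [ContinuousSMul G X], ∃ x : X, ∀ g : G, g • x = x

/-- The pair `(G, H)` is *relatively extremely amenable* if every continuous action of `G`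
on a nonempty compact Hausdorff space has a point fixed by every element of `H`. -/
def RelativelyExtremelyAmenable (G : Type) [Group G] [TopologicalSpace G] (H : Subgroup G) :
    Prop :=
  ∀ (X : Type) [TopologicalSpace X] [CompactSpace X] [T2Space X] [Nonempty X]
    [MulAction G X] [ContinuousSMul G X], ∃ x : X, ∀ h ∈ H, h • x = x

set_option maxHeartbeats 1000000 in
/-- A non-compact locally compact Hausdorff topological group `G` is not relatively
extremely amenable over any nontrivial subgroup `H`. -/
theorem not_relativelyExtremelyAmenable_of_locallyCompact_noncompact
    (G : Type) [Group G] [TopologicalSpace G] [IsTopologicalGroup G] [T2Space G]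
    [LocallyCompactSpace G] (hnc : ¬ CompactSpace G)
    (H : Subgroup G) (hH : H ≠ ⊥) :
    ¬ RelativelyExtremelyAmenable G H := by
  classical
  intro hrea
  obtain ⟨h, hHh, hne⟩ : ∃ h : G, h ∈ H ∧ h ≠ 1 := by
    rcases H.bot_or_exists_ne_one with h1 | h2
    · exact absurd h1 hH
    · exact h2
  obtain ⟨k, f, hIcc, hone, hdisj, hunif⟩ := veech_function hne
  -- ambient product space
  set Sorb : Set (G → Fin (k + 1) → ℝ) := {φ | ∃ a : G, φ = fun x => f (x * a)} with hSorb
  set Xs : Set (G → Fin (k + 1) → ℝ) := closure Sorb with hXs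
  -- the compact "box"
  set P : Set (G → Fin (k + 1) → ℝ) :=
    Set.pi univ fun _ : G => Set.pi univ fun _ : Fin (k + 1) => Icc (0 : ℝ) 1 with hP
  have hPc : IsCompact P :=
    isCompact_univ_pi fun _ => isCompact_univ_pi fun _ => isCompact_Icc
  have hPcl : IsClosed P :=
    isClosed_set_pi fun _ _ => isClosed_set_pi fun _ _ => isClosed_Icc
  have hSP : Sorb ⊆ P := by
    rintro φ ⟨a, rfl⟩
    intro x _
    intro j _
    exact hIcc (x * a) j
  have hXsP : Xs ⊆ P := closure_minimal hSP hPcl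
  have hXc : IsCompact Xs := hPc.of_isClosed_subset isClosed_closure hXsP
  letI : TopologicalSpace (↥Xs) := inferInstance
  haveI : CompactSpace (↥Xs) := isCompact_iff_compactSpace.1 hXc
  haveI : Nonempty (↥Xs) := ⟨⟨fun x => f (x * 1), subset_closure ⟨1, rfl⟩⟩⟩
  -- invariance of Xs under right translation
  have hR : ∀ g : G, Continuous fun φ : G → Fin (k + 1) → ℝ => fun x => φ (x * g) :=
    fun g => continuous_pi fun x => continuous_apply (x * g)
  have hinv : ∀ g : G, ∀ φ ∈ Xs, (fun x => φ (x * g)) ∈ Xs := by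
    intro g φ hφ
    have h1 : (fun ψ : G → Fin (k + 1) → ℝ => fun x => ψ (x * g)) '' Sorb ⊆ Sorb := by
      rintro _ ⟨ψ, ⟨a, rfl⟩, rfl⟩
      exact ⟨g * a, funext fun x => by simp [mul_assoc]⟩
    have h2 := (image_closure_subset_closure_image (hR g)) (mem_image_of_mem _ hφ)
    exact closure_mono h1 h2
  letI : MulAction G (↥Xs) :=
    { smul := fun g φ => ⟨fun x => φ.1 (x * g), hinv g φ.1 φ.2⟩
      one_smul := fun φ => Subtype.ext (funext fun x => by
        show φ.1 (x * 1) = φ.1 x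
        rw [mul_one])
      mul_smul := fun g₁ g₂ φ => Subtype.ext (funext fun x => by
        show φ.1 (x * (g₁ * g₂)) = φ.1 (x * g₁ * g₂)
        rw [mul_assoc]) }
  haveI : ContinuousSMul G (↥Xs) := by
    constructor
    have hcont : Continuous fun p : G × ↥Xs => (fun x => (p.2 : G → Fin (k + 1) → ℝ) (x * p.1)) := by
      apply continuous_pi; intro x₀; apply continuous_pi; intro j
      rw [continuous_iff_continuousAt]
      rintro ⟨g₀, φ₀⟩
      have : ContinuousAt (fun p : G × ↥Xs => (p.2 : G → Fin (k + 1) → ℝ) (x₀ * p.1) j)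
          (g₀, φ₀) := by
        rw [ContinuousAt, Metric.tendsto_nhds]
        intro ε hε
        obtain ⟨U, hU, hUp⟩ := hunif (ε / 3) (by positivity)
        -- every element of Xs satisfies the uniform-continuity estimate
        have hcl : ∀ ψ ∈ Xs, ∀ u ∈ U, ∀ y : G, |ψ (u * y) j - ψ y j| ≤ ε / 3 := by
          have hC : IsClosed {ψ : G → Fin (k + 1) → ℝ |
              ∀ u ∈ U, ∀ y : G, |ψ (u * y) j - ψ y j| ≤ ε / 3} := by
            have : {ψ : G → Fin (k + 1) → ℝ | ∀ u ∈ U, ∀ y : G, |ψ (u * y) j - ψ y j| ≤ ε / 3}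
                = ⋂ u ∈ U, ⋂ y : G, {ψ | |ψ (u * y) j - ψ y j| ≤ ε / 3} := by
              ext ψ; simp only [mem_setOf_eq, mem_iInter]
            rw [this]
            refine isClosed_biInter fun u _ => isClosed_iInter fun y => ?_
            have hev : ∀ z : G, Continuous fun ψ : G → Fin (k + 1) → ℝ => ψ z j :=
              fun z => (continuous_apply j).comp (continuous_apply z)
            exact isClosed_le (((hev (u * y)).sub (hev y)).abs) continuous_const
          have hS : Sorb ⊆ {ψ : G → Fin (k + 1) → ℝ |
              ∀ u ∈ U, ∀ y : G, |ψ (u * y) j - ψ y j| ≤ ε / 3} := by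
            rintro _ ⟨a, rfl⟩ u hu y
            have := hUp u hu (y * a) j
            simpa [mul_assoc] using this
          intro ψ hψ
          exact closure_minimal hS hC hψ
        -- neighborhoods
        have hA : {g : G | x₀ * g * g₀⁻¹ * x₀⁻¹ ∈ U} ∈ 𝓝 g₀ := by
          have hct : Continuous fun g : G => x₀ * g * g₀⁻¹ * x₀⁻¹ := by continuity
          have h1 : x₀ * g₀ * g₀⁻¹ * x₀⁻¹ = 1 := by group
          exact hct.continuousAt (x := g₀) |>.preimage_mem_nhds (by rw [h1]; exact hU)
        have hB : {φ : ↥Xs | |(φ : G → Fin (k + 1) → ℝ) (x₀ * g₀) j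
            - (φ₀ : G → Fin (k + 1) → ℝ) (x₀ * g₀) j| < ε / 3} ∈ 𝓝 φ₀ := by
          have hev : Continuous fun φ : ↥Xs => (φ : G → Fin (k + 1) → ℝ) (x₀ * g₀) j :=
            (continuous_apply j).comp ((continuous_apply (x₀ * g₀)).comp continuous_subtype_val)
          have : IsOpen {φ : ↥Xs | |(φ : G → Fin (k + 1) → ℝ) (x₀ * g₀) j
              - (φ₀ : G → Fin (k + 1) → ℝ) (x₀ * g₀) j| < ε / 3} := by
            have : Continuous fun φ : ↥Xs => |(φ : G → Fin (k + 1) → ℝ) (x₀ * g₀) j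
                - (φ₀ : G → Fin (k + 1) → ℝ) (x₀ * g₀) j| := (hev.sub continuous_const).abs
            exact isOpen_lt this continuous_const
          exact this.mem_nhds (by
            show |(φ₀ : G → Fin (k + 1) → ℝ) (x₀ * g₀) j
              - (φ₀ : G → Fin (k + 1) → ℝ) (x₀ * g₀) j| < ε / 3
            rw [sub_self, abs_zero]; positivity)
        filter_upwards [prod_mem_nhds hA hB] with p hp
        obtain ⟨hpA, hpB⟩ := hp
        rcases p with ⟨g, φ⟩
        simp only [mem_setOf_eq] at hpA hpB
        have key : |(φ : G → Fin (k + 1) → ℝ) (x₀ * g) j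
            - (φ : G → Fin (k + 1) → ℝ) (x₀ * g₀) j| ≤ ε / 3 := by
          have := hcl φ.1 φ.2 _ hpA (x₀ * g₀)
          have harg : x₀ * g * g₀⁻¹ * x₀⁻¹ * (x₀ * g₀) = x₀ * g := by group
          rwa [harg] at this
        rw [Real.dist_eq]
        have tri := abs_sub_le ((φ : G → Fin (k + 1) → ℝ) (x₀ * g) j)
          ((φ : G → Fin (k + 1) → ℝ) (x₀ * g₀) j)
          ((φ₀ : G → Fin (k + 1) → ℝ) (x₀ * g₀) j)
        linarith
      exact this
    exact hcont.subtype_mk _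
  -- apply relative extreme amenability
  obtain ⟨⟨φ, hφ⟩, hfix⟩ := hrea (↥Xs)
  have hfix' := hfix h hHh
  have hφh : ∀ j, φ h j = φ 1 j := by
    have h1 := congrArg Subtype.val hfix'
    have h2 := congrFun h1 1
    have h3 : φ (1 * h) = φ 1 := h2
    rw [one_mul] at h3
    exact fun j => congrFun h3 j
  -- the closed condition: sum of mins vanishes on Xs
  have hmin0 : ∀ ψ ∈ Xs, (∑ j : Fin (k + 1), min (ψ h j) (ψ 1 j)) = 0 := by
    have hC : IsClosed {ψ : G → Fin (k + 1) → ℝ |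
        (∑ j : Fin (k + 1), min (ψ h j) (ψ 1 j)) = 0} := by
      have hev : ∀ z : G, ∀ j : Fin (k + 1),
          Continuous fun ψ : G → Fin (k + 1) → ℝ => ψ z j :=
        fun z j => (continuous_apply j).comp (continuous_apply z)
      exact isClosed_eq (continuous_finset_sum _ fun j _ => (hev h j).min (hev 1 j))
        continuous_const
    have hS : Sorb ⊆ {ψ : G → Fin (k + 1) → ℝ |
        (∑ j : Fin (k + 1), min (ψ h j) (ψ 1 j)) = 0} := by
      rintro _ ⟨a, rfl⟩
      refine Finset.sum_eq_zero fun j _ => ?_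
      show f (h * a) j ⊓ f (1 * a) j = 0
      rw [one_mul]
      rcases hdisj a j with h0 | h0
      · rw [h0]; exact min_eq_left (hIcc a j).1
      · rw [h0]; exact min_eq_right (hIcc (h * a) j).1
    intro ψ hψ
    exact closure_minimal hS hC hψ
  -- the closed condition: some coordinate equals 1 at the identity
  have hsome1 : ∀ ψ ∈ Xs, ∃ j, ψ 1 j = 1 := by
    have hC : IsClosed {ψ : G → Fin (k + 1) → ℝ | ∃ j, ψ 1 j = 1} := by
      have : {ψ : G → Fin (k + 1) → ℝ | ∃ j, ψ 1 j = 1}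
          = ⋃ j : Fin (k + 1), {ψ | ψ 1 j = 1} := by
        ext ψ; simp only [mem_setOf_eq, mem_iUnion]
      rw [this]
      exact isClosed_iUnion_of_finite fun j =>
        isClosed_eq ((continuous_apply j).comp (continuous_apply 1)) continuous_const
    have hS : Sorb ⊆ {ψ : G → Fin (k + 1) → ℝ | ∃ j, ψ 1 j = 1} := by
      rintro _ ⟨a, rfl⟩
      obtain ⟨j, hj⟩ := hone a
      exact ⟨j, by simpa using hj⟩
    intro ψ hψ
    exact closure_minimal hS hC hψ
  -- contradiction
  obtain ⟨j₀, hj₀⟩ := hsome1 φ hφ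
  have hnonneg : ∀ j : Fin (k + 1), 0 ≤ φ 1 j := by
    intro j
    have := hXsP hφ
    exact (this 1 (mem_univ _) j (mem_univ _)).1
  have hsum := hmin0 φ hφ
  have heq : (∑ j : Fin (k + 1), min (φ h j) (φ 1 j)) = ∑ j : Fin (k + 1), φ 1 j := by
    refine Finset.sum_congr rfl fun j _ => ?_
    rw [hφh j, min_self]
  rw [heq] at hsum
  have h1le : (1 : ℝ) ≤ ∑ j : Fin (k + 1), φ 1 j := by
    rw [← hj₀]
    exact Finset.single_le_sum (fun j _ => hnonneg j) (Finset.mem_univ j₀)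
  rw [hsum] at h1le
  linarith
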